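/- arXiv:1702.03887 — 6 statements merged into one kernel-verified Lean document; each statement's English description precedes it below -/
import Mathlib

section
/- Let β ∈ [0, π/2) and let ρ : ℝ × ℝ → ℝ be a continuously differentiable function with ρ(θ,ψ) > 0 for all (θ,ψ). If the surface defined by ρ is equiangular with characteristic angle β on the strip {(θ,ψ) : θ ∈ ℝ, ψ ∈ (−π/2, π/2)}, i.e. the angle between N(θ,ψ) and X(θ,ψ) equals β for all θ ∈ ℝ and ψ ∈ (−π/2, π/2), then ρ satisfies the partial differential equation ρ_θ(θ,ψ)² + ρ_ψ(θ,ψ)² cos²ψ = ρ(θ,ψ)² cos²ψ · tan²β for all θ ∈ ℝ and ψ ∈ (−π/2, π/2). -/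
open Real

/-- The surface map `X(θ,ψ) = ρ(θ,ψ)·(cos ψ cos θ, cos ψ sin θ, sin ψ)`. -/
noncomputable def Xsurf (ρ : ℝ → ℝ → ℝ) (θ ψ : ℝ) : EuclideanSpace ℝ (Fin 3) :=
  WithLp.toLp 2 ![ρ θ ψ * Real.cos ψ * Real.cos θ, ρ θ ψ * Real.cos ψ * Real.sin θ, ρ θ ψ * Real.sin ψ]

/-- The normal vector `N = X_θ × X_ψ`. -/
noncomputable def Nsurf (ρ : ℝ → ℝ → ℝ) (θ ψ : ℝ) : EuclideanSpace ℝ (Fin 3) :=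
  WithLp.toLp 2 (crossProduct (deriv (fun t => Xsurf ρ t ψ) θ).ofLp (deriv (fun s => Xsurf ρ θ s) ψ).ofLp)

theorem aux_hasDerivAt_theta (ρ : ℝ → ℝ → ℝ) (θ ψ A : ℝ)
    (hθd : HasDerivAt (fun t => ρ t ψ) A θ) :
    HasDerivAt (fun t => Xsurf ρ t ψ)
      (WithLp.toLp 2 ![A * Real.cos ψ * Real.cos θ - ρ θ ψ * Real.cos ψ * Real.sin θ,
         A * Real.cos ψ * Real.sin θ + ρ θ ψ * Real.cos ψ * Real.cos θ,
         A * Real.sin ψ]) θ := by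
  have h0 : HasDerivAt (fun t => ρ t ψ * Real.cos ψ * Real.cos t)
      (A * Real.cos ψ * Real.cos θ - ρ θ ψ * Real.cos ψ * Real.sin θ) θ := by
    have := (hθd.mul_const (Real.cos ψ)).mul (Real.hasDerivAt_cos θ)
    refine this.congr_deriv ?_; ring
  have h1 : HasDerivAt (fun t => ρ t ψ * Real.cos ψ * Real.sin t)
      (A * Real.cos ψ * Real.sin θ + ρ θ ψ * Real.cos ψ * Real.cos θ) θ :=
    (hθd.mul_const (Real.cos ψ)).mul (Real.hasDerivAt_sin θ)
  have h2 : HasDerivAt (fun t => ρ t ψ * Real.sin ψ) (A * Real.sin ψ) θ :=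
    hθd.mul_const (Real.sin ψ)
  have hg : HasDerivAt (fun t => (![ρ t ψ * Real.cos ψ * Real.cos t,
      ρ t ψ * Real.cos ψ * Real.sin t, ρ t ψ * Real.sin ψ] : Fin 3 → ℝ))
      ![A * Real.cos ψ * Real.cos θ - ρ θ ψ * Real.cos ψ * Real.sin θ,
         A * Real.cos ψ * Real.sin θ + ρ θ ψ * Real.cos ψ * Real.cos θ,
         A * Real.sin ψ] θ := by
    rw [hasDerivAt_pi]
    intro i
    fin_cases i
    · exact h0
    · exact h1
    · exact h2
  exact (EuclideanSpace.equiv (Fin 3) ℝ).symm.hasFDerivAt.comp_hasDerivAt _ hg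

theorem aux_hasDerivAt_psi (ρ : ℝ → ℝ → ℝ) (θ ψ B : ℝ)
    (hψd : HasDerivAt (fun s => ρ θ s) B ψ) :
    HasDerivAt (fun s => Xsurf ρ θ s)
      (WithLp.toLp 2 ![B * Real.cos ψ * Real.cos θ - ρ θ ψ * Real.sin ψ * Real.cos θ,
         B * Real.cos ψ * Real.sin θ - ρ θ ψ * Real.sin ψ * Real.sin θ,
         B * Real.sin ψ + ρ θ ψ * Real.cos ψ]) ψ := by
  have h0 : HasDerivAt (fun s => ρ θ s * Real.cos s * Real.cos θ)
      (B * Real.cos ψ * Real.cos θ - ρ θ ψ * Real.sin ψ * Real.cos θ) ψ := by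
    have := (hψd.mul (Real.hasDerivAt_cos ψ)).mul_const (Real.cos θ)
    refine this.congr_deriv ?_; ring
  have h1 : HasDerivAt (fun s => ρ θ s * Real.cos s * Real.sin θ)
      (B * Real.cos ψ * Real.sin θ - ρ θ ψ * Real.sin ψ * Real.sin θ) ψ := by
    have := (hψd.mul (Real.hasDerivAt_cos ψ)).mul_const (Real.sin θ)
    refine this.congr_deriv ?_; ring
  have h2 : HasDerivAt (fun s => ρ θ s * Real.sin s)
      (B * Real.sin ψ + ρ θ ψ * Real.cos ψ) ψ :=
    hψd.mul (Real.hasDerivAt_sin ψ)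
  have hg : HasDerivAt (fun s => (![ρ θ s * Real.cos s * Real.cos θ,
      ρ θ s * Real.cos s * Real.sin θ, ρ θ s * Real.sin s] : Fin 3 → ℝ))
      ![B * Real.cos ψ * Real.cos θ - ρ θ ψ * Real.sin ψ * Real.cos θ,
         B * Real.cos ψ * Real.sin θ - ρ θ ψ * Real.sin ψ * Real.sin θ,
         B * Real.sin ψ + ρ θ ψ * Real.cos ψ] ψ := by
    rw [hasDerivAt_pi]
    intro i
    fin_cases i
    · exact h0
    · exact h1
    · exact h2
  exact (EuclideanSpace.equiv (Fin 3) ℝ).symm.hasFDerivAt.comp_hasDerivAt _ hg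

/-- If a surface with positive `C¹` polar radius `ρ` is equiangular with characteristic
angle `β ∈ [0, π/2)` on the strip `ℝ × (−π/2, π/2)`, then `ρ` satisfies the PDE
`ρ_θ² + ρ_ψ² cos²ψ = ρ² cos²ψ tan²β` there. -/
theorem equiangular_implies_pde (β : ℝ) (hβ : β ∈ Set.Ico 0 (π / 2))
    (ρ : ℝ → ℝ → ℝ) (hρC : ContDiff ℝ 1 (Function.uncurry ρ))
    (hρpos : ∀ θ ψ, 0 < ρ θ ψ)
    (hangle : ∀ θ : ℝ, ∀ ψ ∈ Set.Ioo (-(π / 2)) (π / 2),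
      InnerProductGeometry.angle (Nsurf ρ θ ψ) (Xsurf ρ θ ψ) = β) :
    ∀ θ : ℝ, ∀ ψ ∈ Set.Ioo (-(π / 2)) (π / 2),
      (deriv (fun t => ρ t ψ) θ) ^ 2 + (deriv (fun s => ρ θ s) ψ) ^ 2 * Real.cos ψ ^ 2
        = (ρ θ ψ) ^ 2 * Real.cos ψ ^ 2 * Real.tan β ^ 2 := by
  intro θ ψ hψ
  obtain ⟨h1, h2⟩ := hψ
  have hc : 0 < Real.cos ψ := Real.cos_pos_of_mem_Ioo ⟨h1, h2⟩
  have hr : 0 < ρ θ ψ := hρpos θ ψ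
  have hdiff := hρC.differentiable one_ne_zero
  have hθdiff : DifferentiableAt ℝ (fun t => ρ t ψ) θ :=
    (hdiff (θ, ψ)).comp (f := fun x => (id x, ψ)) θ (differentiableAt_id.prodMk (differentiableAt_const ψ))
  have hψdiff : DifferentiableAt ℝ (fun s => ρ θ s) ψ :=
    (hdiff (θ, ψ)).comp (f := fun x => (θ, id x)) ψ ((differentiableAt_const θ).prodMk differentiableAt_id)
  set A := deriv (fun t => ρ t ψ) θ with hA
  set B := deriv (fun s => ρ θ s) ψ with hB
  have hθd : HasDerivAt (fun t => ρ t ψ) A θ := hθdiff.hasDerivAt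
  have hψd : HasDerivAt (fun s => ρ θ s) B ψ := hψdiff.hasDerivAt
  have hDθ := (aux_hasDerivAt_theta ρ θ ψ A hθd).deriv
  have hDψ := (aux_hasDerivAt_psi ρ θ ψ B hψd).deriv
  -- inner products
  have hI : (inner ℝ (Nsurf ρ θ ψ) (Xsurf ρ θ ψ) : ℝ) = (ρ θ ψ)^3 * Real.cos ψ := by
    rw [Nsurf, hDθ, hDψ]
    simp only [Xsurf, PiLp.inner_apply, RCLike.inner_apply, conj_trivial,
      Fin.sum_univ_three, WithLp.ofLp_toLp, PiLp.toLp_apply, cross_apply, Matrix.cons_val_zero, Matrix.cons_val_one,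
      Matrix.head_cons, Matrix.cons_val_two, Matrix.tail_cons]
    linear_combination ((ρ θ ψ)^3 * Real.cos ψ^3 + (ρ θ ψ)^3 * Real.sin ψ^2 * Real.cos ψ) *
        Real.sin_sq_add_cos_sq θ + ((ρ θ ψ)^3 * Real.cos ψ) * Real.sin_sq_add_cos_sq ψ
  have hNN : (inner ℝ (Nsurf ρ θ ψ) (Nsurf ρ θ ψ) : ℝ)
      = (ρ θ ψ)^2 * (A^2 + B^2 * Real.cos ψ^2 + (ρ θ ψ)^2 * Real.cos ψ^2) := by
    rw [Nsurf, hDθ, hDψ]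
    simp only [PiLp.inner_apply, RCLike.inner_apply, conj_trivial,
      Fin.sum_univ_three, WithLp.ofLp_toLp, PiLp.toLp_apply, cross_apply, Matrix.cons_val_zero, Matrix.cons_val_one,
      Matrix.head_cons, Matrix.cons_val_two, Matrix.tail_cons]
    linear_combination
      ((ρ θ ψ)^4 * Real.cos ψ^4 + (ρ θ ψ)^4 * Real.sin ψ^2 * Real.cos ψ^2
        + (ρ θ ψ)^4 * Real.cos θ^2 * Real.sin ψ^2 * Real.cos ψ^2
        + (ρ θ ψ)^4 * Real.sin θ^2 * Real.sin ψ^2 * Real.cos ψ^2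
        - 2 * B * (ρ θ ψ)^3 * Real.cos θ^2 * Real.sin ψ * Real.cos ψ^3
        - 2 * B * (ρ θ ψ)^3 * Real.sin θ^2 * Real.sin ψ * Real.cos ψ^3
        + B^2 * (ρ θ ψ)^2 * Real.cos ψ^4 + B^2 * (ρ θ ψ)^2 * Real.sin ψ^2 * Real.cos ψ^2
        + B^2 * (ρ θ ψ)^2 * Real.cos θ^2 * Real.cos ψ^4
        + B^2 * (ρ θ ψ)^2 * Real.sin θ^2 * Real.cos ψ^4
        + A^2 * (ρ θ ψ)^2 * Real.cos ψ^4 + 2 * A^2 * (ρ θ ψ)^2 * Real.sin ψ^2 * Real.cos ψ^2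
        + A^2 * (ρ θ ψ)^2 * Real.sin ψ^4) * Real.sin_sq_add_cos_sq θ
      + ((ρ θ ψ)^4 * Real.cos ψ^2 + B^2 * (ρ θ ψ)^2 * Real.cos ψ^2 + A^2 * (ρ θ ψ)^2
        + A^2 * (ρ θ ψ)^2 * Real.cos ψ^2 + A^2 * (ρ θ ψ)^2 * Real.sin ψ^2) *
        Real.sin_sq_add_cos_sq ψ
  have hXX : (inner ℝ (Xsurf ρ θ ψ) (Xsurf ρ θ ψ) : ℝ) = (ρ θ ψ)^2 := by
    simp only [Xsurf, PiLp.inner_apply, RCLike.inner_apply, conj_trivial,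
      Fin.sum_univ_three, PiLp.toLp_apply, Matrix.cons_val_zero, Matrix.cons_val_one,
      Matrix.head_cons, Matrix.cons_val_two, Matrix.tail_cons]
    linear_combination ((ρ θ ψ)^2 * Real.cos ψ^2) * Real.sin_sq_add_cos_sq θ
      + ((ρ θ ψ)^2) * Real.sin_sq_add_cos_sq ψ
  have hN2 : ‖Nsurf ρ θ ψ‖^2
      = (ρ θ ψ)^2 * (A^2 + B^2 * Real.cos ψ^2 + (ρ θ ψ)^2 * Real.cos ψ^2) := by
    rw [← real_inner_self_eq_norm_sq]; exact hNN
  have hX2 : ‖Xsurf ρ θ ψ‖^2 = (ρ θ ψ)^2 := by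
    rw [← real_inner_self_eq_norm_sq]; exact hXX
  have hang := hangle θ ψ ⟨h1, h2⟩
  have hc2 := InnerProductGeometry.cos_angle_mul_norm_mul_norm (Nsurf ρ θ ψ) (Xsurf ρ θ ψ)
  rw [hang, hI] at hc2
  have hsq : Real.cos β ^ 2 * (‖Nsurf ρ θ ψ‖^2 * ‖Xsurf ρ θ ψ‖^2)
      = ((ρ θ ψ)^3 * Real.cos ψ)^2 := by
    linear_combination (Real.cos β * (‖Nsurf ρ θ ψ‖ * ‖Xsurf ρ θ ψ‖)
      + (ρ θ ψ)^3 * Real.cos ψ) * hc2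
  rw [hN2, hX2] at hsq
  have key2 : Real.cos β ^ 2 * (A^2 + B^2 * Real.cos ψ^2 + (ρ θ ψ)^2 * Real.cos ψ^2)
      = (ρ θ ψ)^2 * Real.cos ψ^2 := by
    have h4 : ((ρ θ ψ)^2 * (ρ θ ψ)^2 : ℝ) ≠ 0 := by positivity
    apply mul_left_cancel₀ h4
    linear_combination hsq
  have hβc : 0 < Real.cos β := by
    apply Real.cos_pos_of_mem_Ioo
    constructor
    · have := Real.pi_pos; linarith [hβ.1]
    · exact hβ.2
  rw [Real.tan_eq_sin_div_cos, div_pow]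
  field_simp
  linear_combination key2 - (ρ θ ψ)^2 * Real.cos ψ^2 * Real.sin_sq_add_cos_sq β
end

section
/- Let ρ₀ > 0, μ, b ∈ ℝ, β ∈ [0, π/2), and define ρ(θ,ψ) = ρ₀ e^{μθ + bψ}. If the surface defined by ρ is equiangular with characteristic angle β on the strip {(θ,ψ) : θ ∈ ℝ, ψ ∈ (−π/2, π/2)} (the angle between N(θ,ψ) and X(θ,ψ) equals β at every such point), then μ = 0 and b² = tan²β (i.e. b = tan β or b = −tan β). -/
open Real

lemma hasDerivAt_euclidean3 {f : ℝ → EuclideanSpace ℝ (Fin 3)} {v : EuclideanSpace ℝ (Fin 3)}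
    {x : ℝ} (h : ∀ i, HasDerivAt (F := ℝ) (fun t => f t i) (v i) x) : HasDerivAt f v x := by
  have hp : HasDerivAt (fun t => (EuclideanSpace.equiv (Fin 3) ℝ) (f t))
      ((EuclideanSpace.equiv (Fin 3) ℝ) v) x := hasDerivAt_pi.2 h
  have := ((EuclideanSpace.equiv (Fin 3) ℝ).symm.toContinuousLinearMap.hasFDerivAt).comp_hasDerivAt
    x hp
  simpa [Function.comp_def] using this

lemma hasDerivAt_theta (ρ₀ μ b θ ψ : ℝ) :
    HasDerivAt (fun t => Xsurf (fun θ ψ => ρ₀ * Real.exp (μ * θ + b * ψ)) t ψ)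
    (WithLp.toLp 2 ![ρ₀ * Real.exp (μ * θ + b * ψ) * (μ * Real.cos ψ * Real.cos θ - Real.cos ψ * Real.sin θ),
       ρ₀ * Real.exp (μ * θ + b * ψ) * (μ * Real.cos ψ * Real.sin θ + Real.cos ψ * Real.cos θ),
       ρ₀ * Real.exp (μ * θ + b * ψ) * (μ * Real.sin ψ)] : EuclideanSpace ℝ (Fin 3)) θ := by
  apply hasDerivAt_euclidean3
  intro i
  have h1 : HasDerivAt (fun t : ℝ => μ * t + b * ψ) μ θ := by
    simpa using ((hasDerivAt_id θ).const_mul μ).add_const (b * ψ)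
  have h2 : HasDerivAt (fun t : ℝ => ρ₀ * Real.exp (μ * t + b * ψ))
      (ρ₀ * (Real.exp (μ * θ + b * ψ) * μ)) θ := h1.exp.const_mul ρ₀
  fin_cases i
  · have := (h2.mul_const (Real.cos ψ)).mul (Real.hasDerivAt_cos θ)
    simp only [Xsurf, PiLp.toLp_apply, Matrix.cons_val_zero]
    convert this using 1
    · rfl
    · rfl
    · funext t; simp
    simp
    try ring
  · have := (h2.mul_const (Real.cos ψ)).mul (Real.hasDerivAt_sin θ)
    simp only [Xsurf, PiLp.toLp_apply, Matrix.cons_val_one, Matrix.head_cons]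
    convert this using 1
    · rfl
    · rfl
    · funext t; simp
    simp
    try ring
  · have := h2.mul_const (Real.sin ψ)
    simp only [Xsurf, PiLp.toLp_apply, Matrix.cons_val_two, Matrix.tail_cons, Matrix.head_cons]
    convert this using 1
    · rfl
    · rfl
    · funext t; simp
    simp
    try ring

lemma hasDerivAt_psi (ρ₀ μ b θ ψ : ℝ) :
    HasDerivAt (fun s => Xsurf (fun θ ψ => ρ₀ * Real.exp (μ * θ + b * ψ)) θ s)
    (WithLp.toLp 2 ![ρ₀ * Real.exp (μ * θ + b * ψ) * ((b * Real.cos ψ - Real.sin ψ) * Real.cos θ),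
       ρ₀ * Real.exp (μ * θ + b * ψ) * ((b * Real.cos ψ - Real.sin ψ) * Real.sin θ),
       ρ₀ * Real.exp (μ * θ + b * ψ) * (b * Real.sin ψ + Real.cos ψ)] : EuclideanSpace ℝ (Fin 3)) ψ := by
  apply hasDerivAt_euclidean3
  intro i
  have h1 : HasDerivAt (fun s : ℝ => μ * θ + b * s) b ψ := by
    simpa using (((hasDerivAt_id ψ).const_mul b).const_add (μ * θ))
  have h2 : HasDerivAt (fun s : ℝ => ρ₀ * Real.exp (μ * θ + b * s))
      (ρ₀ * (Real.exp (μ * θ + b * ψ) * b)) ψ := h1.exp.const_mul ρ₀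
  fin_cases i
  · have := (h2.mul (Real.hasDerivAt_cos ψ)).mul_const (Real.cos θ)
    simp only [Xsurf, PiLp.toLp_apply, Matrix.cons_val_zero]
    convert this using 1
    · rfl
    · rfl
    · funext t; simp
    simp
    try ring
  · have := (h2.mul (Real.hasDerivAt_cos ψ)).mul_const (Real.sin θ)
    simp only [Xsurf, PiLp.toLp_apply, Matrix.cons_val_one, Matrix.head_cons]
    convert this using 1
    · rfl
    · rfl
    · funext t; simp
    simp
    try ring
  · have := h2.mul (Real.hasDerivAt_sin ψ)
    simp only [Xsurf, PiLp.toLp_apply, Matrix.cons_val_two, Matrix.tail_cons, Matrix.head_cons]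
    convert this using 1
    · rfl
    · rfl
    · funext t; simp
    simp
    try ring

lemma Nsurf_eq (ρ₀ μ b θ ψ : ℝ) :
    Nsurf (fun θ ψ => ρ₀ * Real.exp (μ * θ + b * ψ)) θ ψ =
    WithLp.toLp 2 (crossProduct
      ![ρ₀ * Real.exp (μ * θ + b * ψ) * (μ * Real.cos ψ * Real.cos θ - Real.cos ψ * Real.sin θ),
        ρ₀ * Real.exp (μ * θ + b * ψ) * (μ * Real.cos ψ * Real.sin θ + Real.cos ψ * Real.cos θ),
        ρ₀ * Real.exp (μ * θ + b * ψ) * (μ * Real.sin ψ)]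
      ![ρ₀ * Real.exp (μ * θ + b * ψ) * ((b * Real.cos ψ - Real.sin ψ) * Real.cos θ),
        ρ₀ * Real.exp (μ * θ + b * ψ) * ((b * Real.cos ψ - Real.sin ψ) * Real.sin θ),
        ρ₀ * Real.exp (μ * θ + b * ψ) * (b * Real.sin ψ + Real.cos ψ)]) := by
  rw [Nsurf, (hasDerivAt_theta ρ₀ μ b θ ψ).deriv, (hasDerivAt_psi ρ₀ μ b θ ψ).deriv]

/-- If the self-similar surface `ρ(θ,ψ) = ρ₀ e^{μθ + bψ}` is equiangular with
characteristic angle `β ∈ [0, π/2)` on the strip `ℝ × (−π/2, π/2)`, then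
`μ = 0` and `b² = tan²β`. -/
theorem selfSimilar_equiangular (ρ₀ μ b β : ℝ) (hρ₀ : 0 < ρ₀)
    (hβ : β ∈ Set.Ico 0 (π / 2))
    (hangle : ∀ θ : ℝ, ∀ ψ ∈ Set.Ioo (-(π / 2)) (π / 2),
      InnerProductGeometry.angle
        (Nsurf (fun θ ψ => ρ₀ * Real.exp (μ * θ + b * ψ)) θ ψ)
        (Xsurf (fun θ ψ => ρ₀ * Real.exp (μ * θ + b * ψ)) θ ψ) = β) :
    μ = 0 ∧ b ^ 2 = Real.tan β ^ 2 := by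
  have hpi := Real.pi_pos
  have hcb : 0 < Real.cos β := Real.cos_pos_of_mem_Ioo ⟨by linarith [hβ.1], hβ.2⟩
  set ρ : ℝ → ℝ → ℝ := fun θ ψ => ρ₀ * Real.exp (μ * θ + b * ψ) with hρ
  have hsq : ∀ ψ ∈ Set.Ioo (-(π / 2)) (π / 2),
      (inner ℝ (Nsurf ρ 0 ψ) (Xsurf ρ 0 ψ) : ℝ) ^ 2 =
      Real.cos β ^ 2 * ((inner ℝ (Nsurf ρ 0 ψ) (Nsurf ρ 0 ψ) : ℝ) *
        (inner ℝ (Xsurf ρ 0 ψ) (Xsurf ρ 0 ψ) : ℝ)) := by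
    intro ψ hψ
    set N := Nsurf ρ 0 ψ with hN
    set X := Xsurf ρ 0 ψ with hX
    have hang := hangle 0 ψ hψ
    rw [InnerProductGeometry.angle] at hang
    set q : ℝ := inner ℝ N X / (‖N‖ * ‖X‖) with hq
    have hq1 : |q| ≤ 1 := by
      rcases eq_or_ne (‖N‖ * ‖X‖) 0 with h | h
      · simp [hq, h]
      · have h0 : 0 < ‖N‖ * ‖X‖ :=
          lt_of_le_of_ne (mul_nonneg (norm_nonneg _) (norm_nonneg _)) (Ne.symm h)
        rw [hq, abs_div, abs_of_pos h0, div_le_one h0]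
        exact abs_real_inner_le_norm N X
    have hcos : Real.cos β = q := by
      rw [← hang, Real.cos_arccos (by linarith [(abs_le.mp hq1).1]) (by linarith [(abs_le.mp hq1).2])]
    have hden : ‖N‖ * ‖X‖ ≠ 0 := by
      intro h
      rw [hcos, hq, h, div_zero] at hcb
      exact lt_irrefl 0 hcb
    have hInner : (inner ℝ N X : ℝ) = Real.cos β * (‖N‖ * ‖X‖) := by
      rw [hcos, hq]
      field_simp
      rw [mul_assoc, mul_div_cancel_right₀ _ hden]
    have : (inner ℝ N X : ℝ) ^ 2 = Real.cos β ^ 2 * (‖N‖ ^ 2 * ‖X‖ ^ 2) := by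
      rw [hInner]; ring
    rwa [← real_inner_self_eq_norm_sq N, ← real_inner_self_eq_norm_sq X] at this
  have h0mem : (0:ℝ) ∈ Set.Ioo (-(π/2)) (π/2) := ⟨by linarith, by linarith⟩
  have h3mem : (π/3) ∈ Set.Ioo (-(π/2)) (π/2) := ⟨by linarith, by linarith⟩
  have hA := hsq 0 h0mem
  have hB := hsq (π/3) h3mem
  rw [hρ] at hA hB
  rw [Nsurf_eq ρ₀ μ b] at hA hB
  simp only [cross_apply, Xsurf, PiLp.toLp_apply, PiLp.inner_apply, RCLike.inner_apply, conj_trivial,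
    Fin.sum_univ_three, Matrix.cons_val_zero, Matrix.cons_val_one, Matrix.head_cons,
    Matrix.cons_val_two, Matrix.tail_cons, Real.cos_zero, Real.sin_zero, Real.exp_zero,
    Real.cos_pi_div_three, Real.sin_pi_div_three, mul_zero, zero_mul, mul_one, one_mul,
    add_zero, zero_add, sub_zero] at hA hB
  have h3 : (Real.sqrt 3 : ℝ) ^ 2 = 3 := Real.sq_sqrt (by norm_num)
  have h4 : (Real.sqrt 3 : ℝ) ^ 4 = 9 := by
    have : (Real.sqrt 3 : ℝ) ^ 4 = ((Real.sqrt 3) ^ 2) ^ 2 := by ring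
    rw [this, h3]; norm_num
  have h6 : (Real.sqrt 3 : ℝ) ^ 6 = 27 := by
    have : (Real.sqrt 3 : ℝ) ^ 6 = ((Real.sqrt 3) ^ 2) ^ 3 := by ring
    rw [this, h3]; norm_num
  ring_nf at hA hB
  simp only [h3, h4, h6] at hB
  have e1 : 1 = Real.cos β ^ 2 * (1 + μ ^ 2 + b ^ 2) := by
    apply mul_left_cancel₀ (pow_ne_zero 6 hρ₀.ne')
    linear_combination hA
  have hRne : ρ₀ * Real.exp (b * π * (1/3)) ≠ 0 := by positivity
  have e2 : 1 = Real.cos β ^ 2 * (4 * μ ^ 2 + 1 + b ^ 2) := by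
    apply mul_left_cancel₀ (pow_ne_zero 6 hRne)
    linear_combination 4 * hB
  have hK : 0 < Real.cos β ^ 2 := by positivity
  have h30 : Real.cos β ^ 2 * (3 * μ ^ 2) = 0 := by linear_combination e1 - e2
  have hμ : μ = 0 := by
    rcases mul_eq_zero.mp h30 with h | h
    · exact absurd h hK.ne'
    · have : μ ^ 2 = 0 := by linarith
      exact pow_eq_zero_iff (by norm_num) |>.mp this
  refine ⟨hμ, ?_⟩
  rw [hμ] at e1
  rw [Real.tan_eq_sin_div_cos, div_pow]
  have hs : Real.sin β ^ 2 = 1 - Real.cos β ^ 2 := Real.sin_sq β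
  rw [hs]
  field_simp
  linear_combination -e1
end

section
/- Let ρ : ℝ × ℝ → ℝ be continuously differentiable. Then for all (θ,ψ), the inner product of the normal vector with the position vector satisfies N(θ,ψ) · X(θ,ψ) = ρ(θ,ψ)³ cos ψ. -/
open Real

/-- The inner product of the normal vector with the position vector:
`N · X = ρ³ cos ψ`. -/
theorem normal_dot_position (ρ : ℝ → ℝ → ℝ) (hρC : ContDiff ℝ 1 (Function.uncurry ρ)) :
    ∀ θ ψ : ℝ, (inner ℝ (Nsurf ρ θ ψ) (Xsurf ρ θ ψ) : ℝ) = (ρ θ ψ) ^ 3 * Real.cos ψ := by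
  intro θ ψ
  have hdiff := hρC.differentiable one_ne_zero
  have hfd : HasFDerivAt (Function.uncurry ρ) (fderiv ℝ (Function.uncurry ρ) (θ, ψ)) (θ, ψ) :=
    (hdiff (θ, ψ)).hasFDerivAt
  set rθ := fderiv ℝ (Function.uncurry ρ) (θ, ψ) (1, 0) with hrθ
  set rψ := fderiv ℝ (Function.uncurry ρ) (θ, ψ) (0, 1) with hrψ
  have hθline : HasDerivAt (fun t : ℝ => (t, ψ)) ((1 : ℝ), (0 : ℝ)) θ :=
    (hasDerivAt_id θ).prodMk (hasDerivAt_const θ ψ)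
  have hψline : HasDerivAt (fun s : ℝ => (θ, s)) ((0 : ℝ), (1 : ℝ)) ψ :=
    (hasDerivAt_const ψ θ).prodMk (hasDerivAt_id ψ)
  have hρθ : HasDerivAt (fun t => ρ t ψ) rθ θ := by
    simpa [Function.uncurry, Function.comp_def] using hfd.comp_hasDerivAt θ hθline
  have hρψ : HasDerivAt (fun s => ρ θ s) rψ ψ := by
    simpa [Function.uncurry, Function.comp_def] using hfd.comp_hasDerivAt ψ hψline
  have hXθ : HasDerivAt (F := Fin 3 → ℝ) (fun t => (Xsurf ρ t ψ).ofLp)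
      (![rθ * Real.cos ψ * Real.cos θ - ρ θ ψ * Real.cos ψ * Real.sin θ,
         rθ * Real.cos ψ * Real.sin θ + ρ θ ψ * Real.cos ψ * Real.cos θ,
         rθ * Real.sin ψ]) θ := by
    rw [hasDerivAt_pi]
    intro i
    fin_cases i
    · simpa [Xsurf, mul_comm, mul_assoc, mul_left_comm, Pi.mul_def, sub_eq_add_neg] using
        ((hρθ.mul_const (Real.cos ψ)).mul (Real.hasDerivAt_cos θ))
    · simpa [Xsurf, mul_comm, mul_assoc, mul_left_comm, Pi.mul_def] using
        ((hρθ.mul_const (Real.cos ψ)).mul (Real.hasDerivAt_sin θ))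
    · simpa [Xsurf] using hρθ.mul_const (Real.sin ψ)
  have hXψ : HasDerivAt (F := Fin 3 → ℝ) (fun s => (Xsurf ρ θ s).ofLp)
      (![(rψ * Real.cos ψ - ρ θ ψ * Real.sin ψ) * Real.cos θ,
         (rψ * Real.cos ψ - ρ θ ψ * Real.sin ψ) * Real.sin θ,
         rψ * Real.sin ψ + ρ θ ψ * Real.cos ψ]) ψ := by
    rw [hasDerivAt_pi]
    intro i
    fin_cases i
    · simpa [Xsurf, mul_comm, mul_assoc, mul_left_comm, sub_mul, sub_eq_add_neg] using
        ((hρψ.mul (Real.hasDerivAt_cos ψ)).mul_const (Real.cos θ))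
    · simpa [Xsurf, mul_comm, mul_assoc, mul_left_comm, sub_mul, sub_eq_add_neg] using
        ((hρψ.mul (Real.hasDerivAt_cos ψ)).mul_const (Real.sin θ))
    · simpa [Xsurf, mul_comm, Pi.mul_def] using hρψ.mul (Real.hasDerivAt_sin ψ)
  have hXθ' := (PiLp.continuousLinearEquiv 2 ℝ (fun _ : Fin 3 => ℝ)).symm.hasFDerivAt.comp_hasDerivAt θ hXθ
  have hXψ' := (PiLp.continuousLinearEquiv 2 ℝ (fun _ : Fin 3 => ℝ)).symm.hasFDerivAt.comp_hasDerivAt ψ hXψ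
  have key : inner ℝ (Nsurf ρ θ ψ) (Xsurf ρ θ ψ) = (ρ θ ψ) ^ 3 * Real.cos ψ := by
    have e1 : (fun t => Xsurf ρ t ψ) = (PiLp.continuousLinearEquiv 2 ℝ (fun _ : Fin 3 => ℝ)).symm ∘ (fun t => (Xsurf ρ t ψ).ofLp) := by
      funext t; rfl
    have e2 : (fun s => Xsurf ρ θ s) = (PiLp.continuousLinearEquiv 2 ℝ (fun _ : Fin 3 => ℝ)).symm ∘ (fun s => (Xsurf ρ θ s).ofLp) := by
      funext s; rfl
    unfold Nsurf
    rw [e1, e2, hXθ'.deriv, hXψ'.deriv]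
    simp only [ContinuousLinearEquiv.coe_coe, PiLp.continuousLinearEquiv_symm_apply, WithLp.ofLp_toLp]
    simp only [crossProduct, LinearMap.mk₂_apply, Xsurf, PiLp.inner_apply, RCLike.inner_apply,
    conj_trivial, Fin.sum_univ_three, Matrix.cons_val_zero, Matrix.cons_val_one, Matrix.head_cons,
    Matrix.cons_val_two, Matrix.tail_cons]
    linear_combination (ρ θ ψ) ^ 3 * Real.cos ψ ^ 3 * Real.sin_sq_add_cos_sq θ +
      (ρ θ ψ) ^ 3 * Real.cos ψ * Real.sin ψ ^ 2 * Real.sin_sq_add_cos_sq θ +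
      (ρ θ ψ) ^ 3 * Real.cos ψ * Real.sin_sq_add_cos_sq ψ
  exact key
end

section
/- Let μ > 0 and a > 0, and let h be defined on the interval (−arctan a, arctan a) by h(ψ) = μ·[√(a²+1)·arctan(√(a²+1)·tan ψ / √(a² − tan²ψ)) − arctan(tan ψ / √(a² − tan²ψ))]. Then h is differentiable on (−arctan a, arctan a) with derivative h'(ψ) = μ·√(a² − tan²ψ) for every ψ ∈ (−arctan a, arctan a). -/
open Real

/-- The antiderivative `h(ψ) = μ·[√(a²+1)·arctan(√(a²+1)·tan ψ / √(a² − tan²ψ))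
− arctan(tan ψ / √(a² − tan²ψ))]`. -/
noncomputable def hFun (μ a ψ : ℝ) : ℝ :=
  μ * (Real.sqrt (a ^ 2 + 1) *
        Real.arctan (Real.sqrt (a ^ 2 + 1) * Real.tan ψ / Real.sqrt (a ^ 2 - Real.tan ψ ^ 2))
      - Real.arctan (Real.tan ψ / Real.sqrt (a ^ 2 - Real.tan ψ ^ 2)))

lemma aux_hasDerivAt (a c t : ℝ) (ht : t ^ 2 < a ^ 2) :
    HasDerivAt (fun u : ℝ => Real.arctan (c * u / Real.sqrt (a ^ 2 - u ^ 2)))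
      (c * a ^ 2 / (Real.sqrt (a ^ 2 - t ^ 2) * (a ^ 2 - t ^ 2 + c ^ 2 * t ^ 2))) t := by
  have hpos : 0 < a ^ 2 - t ^ 2 := by linarith
  set s := Real.sqrt (a ^ 2 - t ^ 2) with hsdef
  have hs2 : s ^ 2 = a ^ 2 - t ^ 2 := Real.sq_sqrt hpos.le
  have hs0 : 0 < s := Real.sqrt_pos.mpr hpos
  have h1 : HasDerivAt (fun u : ℝ => a ^ 2 - u ^ 2) (-(2 * t)) t := by
    simpa using (hasDerivAt_const t (a ^ 2)).fun_sub (hasDerivAt_pow 2 t)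
  have h2 : HasDerivAt (fun u : ℝ => Real.sqrt (a ^ 2 - u ^ 2)) (-(2 * t) / (2 * s)) t :=
    h1.sqrt (by simpa [← hsdef] using hpos.ne')
  have h3 : HasDerivAt (fun u : ℝ => c * u) c t := by
    simpa using (hasDerivAt_id t).const_mul c
  have h4 := (h3.fun_div h2 hs0.ne').arctan
  rw [← hsdef] at h4
  have ha2 : a ^ 2 = s ^ 2 + t ^ 2 := by linarith [hs2]
  have key : 1 / (1 + (c * t / s) ^ 2) *
      ((c * s - c * t * (-(2 * t) / (2 * s))) / s ^ 2)
      = c * a ^ 2 / (s * (a ^ 2 - t ^ 2 + c ^ 2 * t ^ 2)) := by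
    rw [ha2]
    have hden : (0:ℝ) < s ^ 2 + t ^ 2 - t ^ 2 + c ^ 2 * t ^ 2 := by
      nlinarith [sq_nonneg (c * t), pow_pos hs0 2]
    field_simp [hs0.ne', hden.ne']
    ring
  rw [key] at h4
  exact h4

/-- On the interval `(−arctan a, arctan a)`, the function `h` is differentiable with
derivative `h'(ψ) = μ·√(a² − tan²ψ)`. -/
theorem hFun_hasDerivAt (μ a : ℝ) (hμ : 0 < μ) (ha : 0 < a) :
    ∀ ψ ∈ Set.Ioo (-Real.arctan a) (Real.arctan a),
      HasDerivAt (hFun μ a) (μ * Real.sqrt (a ^ 2 - Real.tan ψ ^ 2)) ψ := by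
  intro ψ hψ
  obtain ⟨hψ1, hψ2⟩ := hψ
  have hπ1 : -(π / 2) < ψ :=
    lt_of_le_of_lt (by linarith [Real.arctan_lt_pi_div_two a]) hψ1
  have hπ2 : ψ < π / 2 := hψ2.trans (Real.arctan_lt_pi_div_two a)
  have hcos : Real.cos ψ ≠ 0 := (Real.cos_pos_of_mem_Ioo ⟨hπ1, hπ2⟩).ne'
  have htana : Real.tan ψ < a := by
    have := Real.tan_lt_tan_of_lt_of_lt_pi_div_two hπ1 (Real.arctan_lt_pi_div_two a) hψ2
    simpa [Real.tan_arctan] using this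
  have htana' : -a < Real.tan ψ := by
    have := Real.tan_lt_tan_of_lt_of_lt_pi_div_two
      (Real.neg_pi_div_two_lt_arctan (-a)) hπ2
      (by simpa [Real.arctan_neg] using hψ1)
    simpa [Real.tan_arctan] using this
  set t := Real.tan ψ with htdef
  have ht : t ^ 2 < a ^ 2 := sq_lt_sq' htana' htana
  have hpos : 0 < a ^ 2 - t ^ 2 := by linarith
  set s := Real.sqrt (a ^ 2 - t ^ 2) with hsdef
  have hs2 : s ^ 2 = a ^ 2 - t ^ 2 := Real.sq_sqrt hpos.le
  have hs0 : 0 < s := Real.sqrt_pos.mpr hpos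
  set b := Real.sqrt (a ^ 2 + 1) with hbdef
  have hb2 : b ^ 2 = a ^ 2 + 1 := Real.sq_sqrt (by positivity)
  have hA := (aux_hasDerivAt a b t ht).const_mul b
  have hB : HasDerivAt (fun u : ℝ => Real.arctan (u / Real.sqrt (a ^ 2 - u ^ 2)))
      (1 * a ^ 2 / (Real.sqrt (a ^ 2 - t ^ 2) * (a ^ 2 - t ^ 2 + 1 ^ 2 * t ^ 2))) t := by
    simpa using aux_hasDerivAt a 1 t ht
  have hG := hA.sub hB
  have htan : HasDerivAt Real.tan (1 / Real.cos ψ ^ 2) ψ := Real.hasDerivAt_tan hcos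
  have hcomp := (hG.comp ψ htan).const_mul μ
  rw [← hsdef] at hcomp
  have hone : 1 / Real.cos ψ ^ 2 = 1 + t ^ 2 := by
    rw [htdef, one_div, ← Real.inv_one_add_tan_sq hcos, inv_inv]
  have hval : μ * ((b * (b * a ^ 2 / (s * (a ^ 2 - t ^ 2 + b ^ 2 * t ^ 2)))
      - 1 * a ^ 2 / (s * (a ^ 2 - t ^ 2 + 1 ^ 2 * t ^ 2))) * (1 / Real.cos ψ ^ 2))
      = μ * s := by
    rw [hone]
    have e1 : a ^ 2 - t ^ 2 + b ^ 2 * t ^ 2 = a ^ 2 * (1 + t ^ 2) := by rw [hb2]; ring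
    have e2 : a ^ 2 - t ^ 2 + 1 ^ 2 * t ^ 2 = a ^ 2 := by ring
    have e3 : b * (b * a ^ 2 / (s * (a ^ 2 * (1 + t ^ 2))))
        = (a ^ 2 + 1) * a ^ 2 / (s * (a ^ 2 * (1 + t ^ 2))) := by
      rw [mul_div_assoc', ← mul_assoc, ← sq, hb2]
    rw [e1, e2, e3]
    have ha2 : a ^ 2 = s ^ 2 + t ^ 2 := by linarith [hs2]
    rw [ha2]
    have h1t : (0:ℝ) < 1 + t ^ 2 := by positivity
    have hstt : (0:ℝ) < s ^ 2 + t ^ 2 := by positivity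
    field_simp
    ring
  rw [hval] at hcomp
  have hfe : hFun μ a = fun y : ℝ =>
      μ * ((fun u : ℝ => b * Real.arctan (b * u / Real.sqrt (a ^ 2 - u ^ 2))
        - Real.arctan (u / Real.sqrt (a ^ 2 - u ^ 2))) ∘ Real.tan) y := by
    funext x
    simp [hFun, hbdef, Function.comp]
  rw [hfe]
  exact hcomp
end

section
/- Let μ > 0, a > 0, ρ₀ > 0, and let h be as defined on (−arctan a, arctan a). Then the function ρ(θ,ψ) = ρ₀·e^{μθ + h(ψ)} satisfies the equiangular partial differential equation ρ_θ(θ,ψ)² + ρ_ψ(θ,ψ)² cos²ψ = ρ(θ,ψ)² cos²ψ · μ²(a² + 1) for all θ ∈ ℝ and all ψ ∈ (−arctan a, arctan a); that is, ρ satisfies ρ_θ² + ρ_ψ² cos²ψ = ρ² cos²ψ tan²β with tan²β = μ²(a² + 1). -/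
open Real

lemma hasDerivAt_hFun (μ a : ℝ) (ha : 0 < a) {ψ : ℝ}
    (hψ : ψ ∈ Set.Ioo (-Real.arctan a) (Real.arctan a)) :
    HasDerivAt (hFun μ a) (μ * Real.sqrt (a ^ 2 - Real.tan ψ ^ 2)) ψ := by
  obtain ⟨h1, h2⟩ := hψ
  have hπ1 : -(π / 2) < ψ := lt_of_le_of_lt (by linarith [Real.arctan_lt_pi_div_two a]) h1
  have hπ2 : ψ < π / 2 := lt_trans h2 (Real.arctan_lt_pi_div_two a)
  have hcos : 0 < Real.cos ψ := Real.cos_pos_of_mem_Ioo ⟨hπ1, hπ2⟩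
  set t := Real.tan ψ with htdef
  have hta : t < a := by
    have := Real.arctan_strictMono.lt_iff_lt (a := t) (b := a)
    rw [htdef, Real.arctan_tan hπ1 hπ2] at this; exact this.mp h2
  have hta' : -a < t := by
    have := Real.arctan_strictMono.lt_iff_lt (a := -a) (b := t)
    rw [htdef, Real.arctan_tan hπ1 hπ2, Real.arctan_neg] at this; exact this.mp h1
  have hs2 : 0 < a ^ 2 - t ^ 2 := by nlinarith
  set s := Real.sqrt (a ^ 2 - t ^ 2) with hsdef
  have hs : 0 < s := Real.sqrt_pos.mpr hs2
  have hss : s ^ 2 = a ^ 2 - t ^ 2 := Real.sq_sqrt hs2.le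
  set c := Real.sqrt (a ^ 2 + 1) with hcdef
  have hc : 0 < c := Real.sqrt_pos.mpr (by positivity)
  have hcc : c ^ 2 = a ^ 2 + 1 := Real.sq_sqrt (by positivity)
  -- derivative of tan
  have htan : HasDerivAt Real.tan (1 + t ^ 2) ψ := by
    have h := Real.hasDerivAt_tan hcos.ne'
    convert h using 1
    rw [htdef, Real.tan_eq_sin_div_cos]
    field_simp
    exact Real.cos_sq_add_sin_sq ψ
  -- derivative of inner sqrt
  have hinner : HasDerivAt (fun x => a ^ 2 - Real.tan x ^ 2) (-(2 * t * (1 + t ^ 2))) ψ := by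
    have := ((htan.pow 2).const_sub (a ^ 2))
    refine this.congr_deriv (Eq.symm ?_); ring
  have hsqrtc : HasDerivAt (fun x => Real.sqrt (a ^ 2 - Real.tan x ^ 2))
      (1 / (2 * s) * -(2 * t * (1 + t ^ 2))) ψ :=
    (Real.hasDerivAt_sqrt hs2.ne').comp ψ hinner
  -- derivative of u = tan / sqrt
  have hu : HasDerivAt (fun x => Real.tan x / Real.sqrt (a ^ 2 - Real.tan x ^ 2))
      (a ^ 2 * (1 + t ^ 2) / s ^ 3) ψ := by
    have h := htan.div hsqrtc hs.ne'
    refine h.congr_deriv (Eq.symm ?_)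
    rw [← htdef, ← hsdef]
    field_simp
    linear_combination (-1 : ℝ) * hss
  -- arctan of u
  have harc1 : HasDerivAt (fun x => Real.arctan (Real.tan x / Real.sqrt (a ^ 2 - Real.tan x ^ 2)))
      ((1 + t ^ 2) / s) ψ := by
    have h := (Real.hasDerivAt_arctan (t / s)).comp ψ hu
    refine h.congr_deriv (Eq.symm ?_)
    have h2' : 1 + (t / s) ^ 2 = a ^ 2 / s ^ 2 := by
      field_simp; linarith [hss]
    rw [h2']
    field_simp
  -- arctan of c * u
  have hcu : HasDerivAt (fun x => c * (Real.tan x / Real.sqrt (a ^ 2 - Real.tan x ^ 2)))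
      (c * (a ^ 2 * (1 + t ^ 2) / s ^ 3)) ψ := hu.const_mul c
  have harc2 : HasDerivAt (fun x => Real.arctan (c * Real.tan x / Real.sqrt (a ^ 2 - Real.tan x ^ 2)))
      (c / s) ψ := by
    have h := (Real.hasDerivAt_arctan (c * (t / s))).comp ψ hcu
    have heq : (fun x => Real.arctan (c * Real.tan x / Real.sqrt (a ^ 2 - Real.tan x ^ 2)))
        = (fun x => Real.arctan (c * (Real.tan x / Real.sqrt (a ^ 2 - Real.tan x ^ 2)))) := by
      funext x; rw [mul_div_assoc]
    rw [heq]
    refine h.congr_deriv (Eq.symm ?_)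
    have h1' : 1 + (c * (t / s)) ^ 2 = (a ^ 2 * (1 + t ^ 2)) / s ^ 2 := by
      field_simp; linear_combination hss + t^2 * hcc
    rw [h1']
    field_simp
  -- assemble
  have := ((harc2.const_mul c).sub harc1).const_mul μ
  have heq : hFun μ a = fun x => μ *
      (c * Real.arctan (c * Real.tan x / Real.sqrt (a ^ 2 - Real.tan x ^ 2))
        - Real.arctan (Real.tan x / Real.sqrt (a ^ 2 - Real.tan x ^ 2))) := by
    funext x; rfl
  rw [heq]
  refine this.congr_deriv (Eq.symm ?_)
  field_simp
  linear_combination μ * hss - μ * hcc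

/-- The surface `ρ(θ,ψ) = ρ₀ e^{μθ + h(ψ)}` satisfies the equiangular PDE
`ρ_θ² + ρ_ψ² cos²ψ = ρ² cos²ψ · μ²(a² + 1)` (i.e. with `tan²β = μ²(a² + 1)`) for all
`θ ∈ ℝ` and `ψ ∈ (−arctan a, arctan a)`. -/
theorem hFun_solves_pde (μ a ρ₀ : ℝ) (hμ : 0 < μ) (ha : 0 < a) (hρ₀ : 0 < ρ₀) :
    ∀ θ : ℝ, ∀ ψ ∈ Set.Ioo (-Real.arctan a) (Real.arctan a),
      (deriv (fun t => ρ₀ * Real.exp (μ * t + hFun μ a ψ)) θ) ^ 2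
        + (deriv (fun s => ρ₀ * Real.exp (μ * θ + hFun μ a s)) ψ) ^ 2 * Real.cos ψ ^ 2
      = (ρ₀ * Real.exp (μ * θ + hFun μ a ψ)) ^ 2 * Real.cos ψ ^ 2 * (μ ^ 2 * (a ^ 2 + 1)) := by
  intro θ ψ hψ
  obtain ⟨h1, h2⟩ := hψ
  have hπ1 : -(π / 2) < ψ := lt_of_le_of_lt (by linarith [Real.arctan_lt_pi_div_two a]) h1
  have hπ2 : ψ < π / 2 := lt_trans h2 (Real.arctan_lt_pi_div_two a)
  have hcos : 0 < Real.cos ψ := Real.cos_pos_of_mem_Ioo ⟨hπ1, hπ2⟩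
  have hta : Real.tan ψ < a := by
    have := Real.arctan_strictMono.lt_iff_lt (a := Real.tan ψ) (b := a)
    rw [Real.arctan_tan hπ1 hπ2] at this; exact this.mp h2
  have hta' : -a < Real.tan ψ := by
    have := Real.arctan_strictMono.lt_iff_lt (a := -a) (b := Real.tan ψ)
    rw [Real.arctan_tan hπ1 hπ2, Real.arctan_neg] at this; exact this.mp h1
  have hs2 : 0 < a ^ 2 - Real.tan ψ ^ 2 := by nlinarith
  have hss : Real.sqrt (a ^ 2 - Real.tan ψ ^ 2) ^ 2 = a ^ 2 - Real.tan ψ ^ 2 :=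
    Real.sq_sqrt hs2.le
  -- θ derivative
  have hdθ : deriv (fun t => ρ₀ * Real.exp (μ * t + hFun μ a ψ)) θ
      = ρ₀ * Real.exp (μ * θ + hFun μ a ψ) * μ := by
    have h : HasDerivAt (fun t => ρ₀ * Real.exp (μ * t + hFun μ a ψ))
        (ρ₀ * (Real.exp (μ * θ + hFun μ a ψ) * μ)) θ := by
      have h0 : HasDerivAt (fun t : ℝ => μ * t + hFun μ a ψ) μ θ := by
        simpa using ((hasDerivAt_id θ).const_mul μ).add_const (hFun μ a ψ)
      exact (h0.exp).const_mul ρ₀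
    rw [h.deriv]; ring
  -- ψ derivative
  have hdψ : deriv (fun s => ρ₀ * Real.exp (μ * θ + hFun μ a s)) ψ
      = ρ₀ * Real.exp (μ * θ + hFun μ a ψ) * (μ * Real.sqrt (a ^ 2 - Real.tan ψ ^ 2)) := by
    have h : HasDerivAt (fun s => ρ₀ * Real.exp (μ * θ + hFun μ a s))
        (ρ₀ * (Real.exp (μ * θ + hFun μ a ψ) * (μ * Real.sqrt (a ^ 2 - Real.tan ψ ^ 2)))) ψ := by
      have h0 : HasDerivAt (fun s : ℝ => μ * θ + hFun μ a s)
          (μ * Real.sqrt (a ^ 2 - Real.tan ψ ^ 2)) ψ :=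
        (hasDerivAt_hFun μ a ha ⟨h1, h2⟩).const_add (μ * θ)
      exact (h0.exp).const_mul ρ₀
    rw [h.deriv]; ring
  rw [hdθ, hdψ]
  have htc : Real.tan ψ ^ 2 * Real.cos ψ ^ 2 = Real.sin ψ ^ 2 := by
    rw [Real.tan_eq_sin_div_cos]; field_simp
  have hsc := Real.sin_sq_add_cos_sq ψ
  linear_combination ((ρ₀ * Real.exp (μ * θ + hFun μ a ψ)) ^ 2 * μ ^ 2 * Real.cos ψ ^ 2) * hss
    - ((ρ₀ * Real.exp (μ * θ + hFun μ a ψ)) ^ 2 * μ ^ 2) * htc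
    - ((ρ₀ * Real.exp (μ * θ + hFun μ a ψ)) ^ 2 * μ ^ 2) * hsc
end

section
/- Let μ > 0, a > 0, let J = (−arctan a, arctan a), and let h be as defined on J. Let v : J → ℝ be continuously differentiable with v(ψ) > 0 for all ψ ∈ J, and suppose v'(ψ)² = μ²·(a² − tan²ψ)·v(ψ)² for all ψ ∈ J. Then either v(ψ) = v(0)·e^{h(ψ)} for all ψ ∈ J, or v(ψ) = v(0)·e^{−h(ψ)} for all ψ ∈ J. -/
open Real

lemma mem_pi_half (a : ℝ) (ha : 0 < a) {ψ : ℝ}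
    (hψ : ψ ∈ Set.Ioo (-Real.arctan a) (Real.arctan a)) :
    ψ ∈ Set.Ioo (-(π/2)) (π/2) :=
  ⟨lt_of_le_of_lt (neg_le_neg (Real.arctan_lt_pi_div_two a).le) hψ.1,
   hψ.2.trans (Real.arctan_lt_pi_div_two a)⟩

lemma tan_sq_lt (a : ℝ) (ha : 0 < a) {ψ : ℝ}
    (hψ : ψ ∈ Set.Ioo (-Real.arctan a) (Real.arctan a)) :
    Real.tan ψ ^ 2 < a ^ 2 := by
  have hπ := mem_pi_half a ha hψ
  have h1 : Real.tan ψ < a := by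
    have := Real.tan_lt_tan_of_lt_of_lt_pi_div_two hπ.1 (Real.arctan_lt_pi_div_two a) hψ.2
    rwa [Real.tan_arctan] at this
  have h2 : -a < Real.tan ψ := by
    have := Real.tan_lt_tan_of_lt_of_lt_pi_div_two
      (by simpa using neg_lt_neg (Real.arctan_lt_pi_div_two a)) hπ.2 hψ.1
    rwa [Real.tan_neg, Real.tan_arctan] at this
  exact sq_lt_sq' h2 h1

/-- If `v` is continuously differentiable and positive on `J = (−arctan a, arctan a)` and
satisfies `v'² = μ²(a² − tan²ψ)v²` on `J`, then `v = v(0)·e^{h}` on `J` or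
`v = v(0)·e^{−h}` on `J`. -/
theorem separated_ode_solution (μ a : ℝ) (hμ : 0 < μ) (ha : 0 < a)
    (v : ℝ → ℝ)
    (hvdiff : ∀ ψ ∈ Set.Ioo (-Real.arctan a) (Real.arctan a), DifferentiableAt ℝ v ψ)
    (hvcont : ContinuousOn (deriv v) (Set.Ioo (-Real.arctan a) (Real.arctan a)))
    (hvpos : ∀ ψ ∈ Set.Ioo (-Real.arctan a) (Real.arctan a), 0 < v ψ)
    (heq : ∀ ψ ∈ Set.Ioo (-Real.arctan a) (Real.arctan a),
      (deriv v ψ) ^ 2 = μ ^ 2 * (a ^ 2 - Real.tan ψ ^ 2) * (v ψ) ^ 2) :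
    (∀ ψ ∈ Set.Ioo (-Real.arctan a) (Real.arctan a),
        v ψ = v 0 * Real.exp (hFun μ a ψ))
    ∨ (∀ ψ ∈ Set.Ioo (-Real.arctan a) (Real.arctan a),
        v ψ = v 0 * Real.exp (-(hFun μ a ψ))) := by
  set J := Set.Ioo (-Real.arctan a) (Real.arctan a) with hJ
  have harc : 0 < Real.arctan a := by
    rw [← Real.arctan_zero]
    exact Real.arctan_strictMono ha
  have h0J : (0:ℝ) ∈ J := ⟨neg_lt_zero.2 harc, harc⟩
  have hsq : ∀ ψ ∈ J, 0 < a ^ 2 - Real.tan ψ ^ 2 := fun ψ hψ => by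
    linarith [tan_sq_lt a ha hψ]
  have hspos : ∀ ψ ∈ J, 0 < Real.sqrt (a ^ 2 - Real.tan ψ ^ 2) := fun ψ hψ =>
    Real.sqrt_pos.2 (hsq ψ hψ)
  have hDne : ∀ ψ ∈ J, deriv v ψ ≠ 0 := by
    intro ψ hψ h0
    have h1 := heq ψ hψ
    rw [h0] at h1
    have h2 : 0 < μ ^ 2 * (a ^ 2 - Real.tan ψ ^ 2) * (v ψ) ^ 2 :=
      mul_pos (mul_pos (pow_pos hμ 2) (hsq ψ hψ)) (pow_pos (hvpos ψ hψ) 2)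
    rw [eq_comm] at h1
    norm_num at h1
    rcases h1 with (h | h) | h
    · exact hμ.ne' h
    · linarith [hsq ψ hψ]
    · linarith [hvpos ψ hψ]
  -- sign constancy of deriv v on J
  have hsign : (∀ ψ ∈ J, 0 < deriv v ψ) ∨ (∀ ψ ∈ J, deriv v ψ < 0) := by
    rcases (hDne 0 h0J).lt_or_gt with hneg | hpos
    · right
      intro ψ hψ
      by_contra hge
      push_neg at hge
      have hlt : 0 < deriv v ψ := lt_of_le_of_ne hge (Ne.symm (hDne ψ hψ))
      have hsub : Set.uIcc 0 ψ ⊆ J := Set.ordConnected_Ioo.uIcc_subset h0J hψ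
      have hc : ContinuousOn (deriv v) (Set.uIcc 0 ψ) := hvcont.mono hsub
      have hmem : (0:ℝ) ∈ Set.uIcc (deriv v 0) (deriv v ψ) :=
        Set.mem_uIcc.2 (Or.inl ⟨hneg.le, hlt.le⟩)
      obtain ⟨c0, hc0mem, hc0⟩ := intermediate_value_uIcc hc hmem
      exact hDne c0 (hsub hc0mem) hc0
    · left
      intro ψ hψ
      by_contra hge
      push_neg at hge
      have hlt : deriv v ψ < 0 := lt_of_le_of_ne hge (hDne ψ hψ)
      have hsub : Set.uIcc 0 ψ ⊆ J := Set.ordConnected_Ioo.uIcc_subset h0J hψ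
      have hc : ContinuousOn (deriv v) (Set.uIcc 0 ψ) := hvcont.mono hsub
      have hmem : (0:ℝ) ∈ Set.uIcc (deriv v 0) (deriv v ψ) :=
        Set.mem_uIcc.2 (Or.inr ⟨hlt.le, hpos.le⟩)
      obtain ⟨c0, hc0mem, hc0⟩ := intermediate_value_uIcc hc hmem
      exact hDne c0 (hsub hc0mem) hc0
  rcases hsign with hpos | hneg
  · -- deriv v > 0 case : v' = μ s v, v = v 0 * exp (h)
    have hrel : ∀ ψ ∈ J, deriv v ψ = μ * Real.sqrt (a ^ 2 - Real.tan ψ ^ 2) * v ψ := by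
      intro ψ hψ
      set y := μ * Real.sqrt (a ^ 2 - Real.tan ψ ^ 2) * v ψ with hy
      have hypos : 0 < y := mul_pos (mul_pos hμ (hspos ψ hψ)) (hvpos ψ hψ)
      have hx2 : (deriv v ψ) ^ 2 = y ^ 2 := by
        rw [heq ψ hψ, hy, mul_pow, mul_pow, Real.sq_sqrt (hsq ψ hψ).le]
      have hfac : (deriv v ψ - y) * (deriv v ψ + y) = 0 := by linear_combination hx2
      rcases mul_eq_zero.1 hfac with h | h
      · linarith
      · linarith [hpos ψ hψ]
    left
    intro ψ hψ
    have key : ∀ x ∈ J, HasDerivWithinAt (fun y => v y * Real.exp (-(hFun μ a y))) 0 J x := by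
      intro x hx
      have hv := (hvdiff x hx).hasDerivAt
      have hE := ((hasDerivAt_hFun μ a ha hx).neg).exp
      have hm := hv.mul hE
      have : deriv v x * Real.exp (-(hFun μ a x)) +
          v x * (Real.exp (-(hFun μ a x)) * -(μ * Real.sqrt (a ^ 2 - Real.tan x ^ 2))) = 0 := by
        rw [hrel x hx]; ring
      simp only [Pi.neg_apply] at hm
      rw [this] at hm
      exact hm.hasDerivWithinAt
    have hconst := Convex.norm_image_sub_le_of_norm_hasDerivWithin_le (C := 0) key
      (fun x _ => by simp) (convex_Ioo _ _) h0J hψ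
    have hw : v ψ * Real.exp (-(hFun μ a ψ)) = v 0 * Real.exp (-(hFun μ a 0)) := by
      have : |v ψ * Real.exp (-(hFun μ a ψ)) - v 0 * Real.exp (-(hFun μ a 0))| ≤ 0 := by
        simpa using hconst
      have := abs_nonneg (v ψ * Real.exp (-(hFun μ a ψ)) - v 0 * Real.exp (-(hFun μ a 0)))
      have habs : |v ψ * Real.exp (-(hFun μ a ψ)) - v 0 * Real.exp (-(hFun μ a 0))| = 0 := le_antisymm ‹_› ‹_›
      have := abs_eq_zero.1 habs
      linarith
    have h00 : hFun μ a 0 = 0 := by simp [hFun]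
    rw [h00, neg_zero, Real.exp_zero, mul_one] at hw
    calc v ψ = v ψ * Real.exp (-(hFun μ a ψ)) * Real.exp (hFun μ a ψ) := by
          rw [mul_assoc, ← Real.exp_add, neg_add_cancel, Real.exp_zero, mul_one]
      _ = v 0 * Real.exp (hFun μ a ψ) := by rw [hw]
  · -- deriv v < 0 case : v' = -(μ s v), v = v 0 * exp (-h)
    have hrel : ∀ ψ ∈ J, deriv v ψ = -(μ * Real.sqrt (a ^ 2 - Real.tan ψ ^ 2) * v ψ) := by
      intro ψ hψ
      set y := μ * Real.sqrt (a ^ 2 - Real.tan ψ ^ 2) * v ψ with hy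
      have hypos : 0 < y := mul_pos (mul_pos hμ (hspos ψ hψ)) (hvpos ψ hψ)
      have hx2 : (deriv v ψ) ^ 2 = y ^ 2 := by
        rw [heq ψ hψ, hy, mul_pow, mul_pow, Real.sq_sqrt (hsq ψ hψ).le]
      have hfac : (deriv v ψ - y) * (deriv v ψ + y) = 0 := by linear_combination hx2
      rcases mul_eq_zero.1 hfac with h | h
      · linarith [hneg ψ hψ]
      · linarith
    right
    intro ψ hψ
    have key : ∀ x ∈ J, HasDerivWithinAt (fun y => v y * Real.exp (hFun μ a y)) 0 J x := by
      intro x hx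
      have hv := (hvdiff x hx).hasDerivAt
      have hE := (hasDerivAt_hFun μ a ha hx).exp
      have hm := hv.mul hE
      have : deriv v x * Real.exp (hFun μ a x) +
          v x * (Real.exp (hFun μ a x) * (μ * Real.sqrt (a ^ 2 - Real.tan x ^ 2))) = 0 := by
        rw [hrel x hx]; ring
      rw [this] at hm
      exact hm.hasDerivWithinAt
    have hconst := Convex.norm_image_sub_le_of_norm_hasDerivWithin_le (C := 0) key
      (fun x _ => by simp) (convex_Ioo _ _) h0J hψ
    have hw : v ψ * Real.exp (hFun μ a ψ) = v 0 * Real.exp (hFun μ a 0) := by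
      have h1 : |v ψ * Real.exp (hFun μ a ψ) - v 0 * Real.exp (hFun μ a 0)| ≤ 0 := by
        simpa using hconst
      have h2 := abs_nonneg (v ψ * Real.exp (hFun μ a ψ) - v 0 * Real.exp (hFun μ a 0))
      have habs := abs_eq_zero.1 (le_antisymm h1 h2)
      linarith
    have h00 : hFun μ a 0 = 0 := by simp [hFun]
    rw [h00, Real.exp_zero, mul_one] at hw
    calc v ψ = v ψ * Real.exp (hFun μ a ψ) * Real.exp (-(hFun μ a ψ)) := by
          rw [mul_assoc, ← Real.exp_add, add_neg_cancel, Real.exp_zero, mul_one]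
      _ = v 0 * Real.exp (-(hFun μ a ψ)) := by rw [hw]
end
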